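/- arXiv:1706.08343 — 2 statements merged into one kernel-verified Lean document; each statement's English description precedes it below -/
import Mathlib

section
/- Let M be an invertible complex n×n matrix with positive definite imaginary part Im M = (M - M*)/(2i), let S : C^{n×n} → C^{n×n} be a linear map preserving positive semidefinite matrices, let A be an n×n matrix with negative semidefinite imaginary part, and let z ∈ ℂ with Im z > 0. If -M⁻¹ = z·I - A + S[M], then Im M ≥ (Im z)·‖M⁻¹‖⁻²·I, where ‖·‖ is the operator norm. In particular Im M is bounded below by a positive multiple of the identity. -/
open Matrix
open scoped ComplexOrder

/-- The imaginary part `(M - M*)/(2i)` of a complex square matrix. -/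
noncomputable def imPart {n : ℕ} (M : Matrix (Fin n) (Fin n) ℂ) : Matrix (Fin n) (Fin n) ℂ :=
  (2 * Complex.I)⁻¹ • (M - Mᴴ)

/-- The operator norm of a matrix, induced by the Euclidean norm on `ℂⁿ`. -/
noncomputable def opNorm {n : ℕ} (M : Matrix (Fin n) (Fin n) ℂ) : ℝ :=
  ‖Matrix.toEuclideanCLM (𝕜 := ℂ) M‖

variable {n : ℕ}

lemma conj_quad (C : Matrix (Fin n) (Fin n) ℂ) (x : Fin n → ℂ) :
    star x ⬝ᵥ Cᴴ *ᵥ x = star (star x ⬝ᵥ C *ᵥ x) := by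
  rw [mulVec_conjTranspose, star_dotProduct_star, dotProduct_mulVec]

lemma quad_imPart (C : Matrix (Fin n) (Fin n) ℂ) (x : Fin n → ℂ) :
    star x ⬝ᵥ (imPart C) *ᵥ x = (((star x ⬝ᵥ C *ᵥ x).im : ℝ) : ℂ) := by
  rw [imPart, smul_mulVec, dotProduct_smul, sub_mulVec, dotProduct_sub, conj_quad]
  set q := star x ⬝ᵥ C *ᵥ x
  rw [show (star q : ℂ) = (starRingEnd ℂ) q from rfl]
  rw [Complex.sub_conj]
  have : Complex.I ≠ 0 := Complex.I_ne_zero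
  field_simp
  have h2 : Complex.I * Complex.I⁻¹ = 1 := mul_inv_cancel₀ this
  push_cast
  linear_combination (↑q.im : ℂ) * h2

lemma dot_eq_inner (C : Matrix (Fin n) (Fin n) ℂ) (x y : Fin n → ℂ) :
    star x ⬝ᵥ C *ᵥ y =
      @inner ℂ _ _ ((WithLp.equiv 2 (Fin n → ℂ)).symm x)
        (Matrix.toEuclideanCLM (𝕜 := ℂ) C ((WithLp.equiv 2 (Fin n → ℂ)).symm y)) := by
  rw [WithLp.equiv_symm_apply, Matrix.toEuclideanCLM_toLp, PiLp.inner_apply]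
  simp [Matrix.toLin'_apply, dotProduct, mul_comm]

lemma dot_self_eq_norm_sq (x : Fin n → ℂ) :
    star x ⬝ᵥ x = ((‖(WithLp.equiv 2 (Fin n → ℂ)).symm x‖ ^ 2 : ℝ) : ℂ) := by
  have := dot_eq_inner (1 : Matrix (Fin n) (Fin n) ℂ) x x
  simp only [_root_.map_one, ContinuousLinearMap.one_apply, one_mulVec] at this
  rw [this, inner_self_eq_norm_sq_to_K]
  norm_cast

lemma herm_shift_psd (H : Matrix (Fin n) (Fin n) ℂ) (hH : H.IsHermitian) :
    (H + ((‖Matrix.toEuclideanCLM (𝕜 := ℂ) H‖ : ℝ) : ℂ) • 1).PosSemidef := by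
  set c : ℝ := ‖Matrix.toEuclideanCLM (𝕜 := ℂ) H‖ with hc
  rw [posSemidef_iff_dotProduct_mulVec]
  constructor
  · apply hH.add
    rw [Matrix.IsHermitian, conjTranspose_smul, conjTranspose_one, Complex.star_def,
      Complex.conj_ofReal]
  · intro x
    set xe := (WithLp.equiv 2 (Fin n → ℂ)).symm x
    have hq : star x ⬝ᵥ (H + ((c : ℝ) : ℂ) • 1) *ᵥ x
        = star x ⬝ᵥ H *ᵥ x + ((c * ‖xe‖ ^ 2 : ℝ) : ℂ) := by
      rw [add_mulVec, dotProduct_add, smul_mulVec, dotProduct_smul, one_mulVec,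
        dot_self_eq_norm_sq, smul_eq_mul]
      push_cast
      ring
    rw [hq]
    have hherm : star (star x ⬝ᵥ H *ᵥ x) = star x ⬝ᵥ H *ᵥ x := by
      rw [← conj_quad, hH.eq]
    have him : (star x ⬝ᵥ H *ᵥ x).im = 0 := by
      have h2 : -(star x ⬝ᵥ H *ᵥ x).im = (star x ⬝ᵥ H *ᵥ x).im := by
        simpa [Complex.star_def] using congrArg Complex.im hherm
      linarith
    have hbound : |(star x ⬝ᵥ H *ᵥ x).re| ≤ c * ‖xe‖ ^ 2 := by
      have h1 : ‖star x ⬝ᵥ H *ᵥ x‖ ≤ c * ‖xe‖ ^ 2 := by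
        rw [dot_eq_inner]
        calc ‖@inner ℂ _ _ xe (Matrix.toEuclideanCLM (𝕜 := ℂ) H xe)‖
            ≤ ‖xe‖ * ‖Matrix.toEuclideanCLM (𝕜 := ℂ) H xe‖ := norm_inner_le_norm _ _
          _ ≤ ‖xe‖ * (c * ‖xe‖) := by
              gcongr
              exact (Matrix.toEuclideanCLM (𝕜 := ℂ) H).le_opNorm xe
          _ = c * ‖xe‖ ^ 2 := by ring
      calc |(star x ⬝ᵥ H *ᵥ x).re| ≤ ‖star x ⬝ᵥ H *ᵥ x‖ := Complex.abs_re_le_norm _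
        _ ≤ c * ‖xe‖ ^ 2 := h1
    rw [Complex.le_def]
    constructor
    · simp only [Complex.add_re, Complex.ofReal_re, Complex.zero_re]
      have := abs_le.mp hbound
      linarith [this.1]
    · simp only [Complex.add_im, him, Complex.ofReal_im, Complex.zero_im, zero_add]

variable (S : Matrix (Fin n) (Fin n) ℂ →ₗ[ℂ] Matrix (Fin n) (Fin n) ℂ)

lemma S_herm (hS : ∀ R : Matrix (Fin n) (Fin n) ℂ, R.PosSemidef → (S R).PosSemidef)
    (H : Matrix (Fin n) (Fin n) ℂ) (hH : H.IsHermitian) : (S H).IsHermitian := by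
  set c : ℝ := ‖Matrix.toEuclideanCLM (𝕜 := ℂ) H‖ with hc
  have h1 : (H + ((c : ℝ) : ℂ) • 1).PosSemidef := herm_shift_psd H hH
  have h2 : (((c : ℝ) : ℂ) • (1 : Matrix (Fin n) (Fin n) ℂ)).PosSemidef := by
    have : (((c : ℝ) : ℂ) • (1 : Matrix (Fin n) (Fin n) ℂ)) = diagonal (fun _ => (c : ℂ)) := by
      ext i j
      by_cases h : i = j <;> simp [Matrix.one_apply, Matrix.diagonal_apply, h]
    rw [this]
    exact PosSemidef.diagonal fun i => by positivity
  have hdecomp : H = (H + ((c : ℝ) : ℂ) • 1) - ((c : ℝ) : ℂ) • 1 := by rw [add_sub_cancel_right]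
  rw [hdecomp, map_sub]
  exact ((hS _ h1).isHermitian).sub ((hS _ h2).isHermitian)

lemma realPart_herm (C : Matrix (Fin n) (Fin n) ℂ) :
    ((2 : ℂ)⁻¹ • (C + Cᴴ)).IsHermitian := by
  rw [Matrix.IsHermitian, conjTranspose_smul, conjTranspose_add, conjTranspose_conjTranspose]
  simp [add_comm]

lemma imPart_herm (C : Matrix (Fin n) (Fin n) ℂ) : (imPart C).IsHermitian := by
  rw [Matrix.IsHermitian, imPart, conjTranspose_smul, conjTranspose_sub,
    conjTranspose_conjTranspose]
  rw [show (star (2 * Complex.I)⁻¹ : ℂ) = -(2 * Complex.I)⁻¹ by simp [Complex.ext_iff]]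
  rw [neg_smul, ← smul_neg, neg_sub]

lemma matrix_decomp (C : Matrix (Fin n) (Fin n) ℂ) :
    C = (2 : ℂ)⁻¹ • (C + Cᴴ) + Complex.I • imPart C ∧
    Cᴴ = (2 : ℂ)⁻¹ • (C + Cᴴ) - Complex.I • imPart C := by
  have key : Complex.I • imPart C = (2 : ℂ)⁻¹ • (C - Cᴴ) := by
    rw [imPart, smul_smul]
    congr 1
    rw [mul_inv]
    field_simp
  constructor
  · rw [key]; module
  · rw [key]; module

lemma S_conjTranspose (hS : ∀ R : Matrix (Fin n) (Fin n) ℂ, R.PosSemidef → (S R).PosSemidef) (C : Matrix (Fin n) (Fin n) ℂ) : S Cᴴ = (S C)ᴴ := by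
  obtain ⟨h1, h2⟩ := matrix_decomp C
  have hH := S_herm S hS _ (realPart_herm C)
  have hK := S_herm S hS _ (imPart_herm C)
  have e1 : S Cᴴ = S ((2 : ℂ)⁻¹ • (C + Cᴴ)) - Complex.I • S (imPart C) := by
    conv_lhs => rw [h2]
    rw [S.map_sub, show S (Complex.I • imPart C) = Complex.I • S (imPart C) from
      S.map_smul _ _]
  have e2 : (S C)ᴴ = S ((2 : ℂ)⁻¹ • (C + Cᴴ)) - Complex.I • S (imPart C) := by
    conv_lhs => rw [h1]
    rw [S.map_add, show S (Complex.I • imPart C) = Complex.I • S (imPart C) from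
      S.map_smul _ _, conjTranspose_add, conjTranspose_smul, hH.eq, hK.eq,
      show (star Complex.I : ℂ) = -Complex.I by simp]
    module
  rw [e1, e2]

lemma imPart_S (hS : ∀ R : Matrix (Fin n) (Fin n) ℂ, R.PosSemidef → (S R).PosSemidef) (C : Matrix (Fin n) (Fin n) ℂ) : imPart (S C) = S (imPart C) := by
  rw [imPart, imPart, ← S_conjTranspose S hS, ← S.map_sub, ← S.map_smul]


set_option maxHeartbeats 1000000 in
set_option synthInstance.maxHeartbeats 400000 in
theorem stmt_0 {n : ℕ} (M A : Matrix (Fin n) (Fin n) ℂ) (hM : IsUnit M)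
    (hIm : (imPart M).PosDef)
    (S : Matrix (Fin n) (Fin n) ℂ →ₗ[ℂ] Matrix (Fin n) (Fin n) ℂ)
    (hS : ∀ R : Matrix (Fin n) (Fin n) ℂ, R.PosSemidef → (S R).PosSemidef)
    (hA : (-(imPart A)).PosSemidef)
    (z : ℂ) (hz : 0 < z.im)
    (heq : -M⁻¹ = z • (1 : Matrix (Fin n) (Fin n) ℂ) - A + S M) :
    (imPart M - ((z.im / opNorm M⁻¹ ^ 2 : ℝ) : ℂ) • (1 : Matrix (Fin n) (Fin n) ℂ)).PosSemidef := by
  by_cases hzero : opNorm M⁻¹ = 0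
  · have h0 : Matrix.toEuclideanCLM (𝕜 := ℂ) M⁻¹ = 0 := norm_eq_zero.mp (by rwa [opNorm] at hzero)
    have hMinv : M⁻¹ = 0 := by
      have := congrArg (Matrix.toEuclideanCLM (𝕜 := ℂ) (n := Fin n)).symm h0
      simpa using this
    have hdet : IsUnit M.det := (Matrix.isUnit_iff_isUnit_det M).mp hM
    have h1 : (1 : Matrix (Fin n) (Fin n) ℂ) = 0 := by
      rw [← Matrix.mul_nonsing_inv M hdet, hMinv, Matrix.mul_zero]
    rw [h1, smul_zero, sub_zero]
    exact hIm.posSemidef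
  · set k : ℝ := opNorm M⁻¹ with hk
    have hkpos : 0 < k := lt_of_le_of_ne (by rw [hk, opNorm]; exact norm_nonneg _) (Ne.symm hzero)
    have hdet : IsUnit M.det := (Matrix.isUnit_iff_isUnit_det M).mp hM
    have hMM : M * M⁻¹ = 1 := Matrix.mul_nonsing_inv M hdet
    rw [posSemidef_iff_dotProduct_mulVec]
    constructor
    · exact hIm.1.sub (by
        rw [Matrix.IsHermitian, conjTranspose_smul, conjTranspose_one, Complex.star_def,
          Complex.conj_ofReal])
    · intro x
      set y : Fin n → ℂ := Mᴴ *ᵥ x with hy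
      set xe := (WithLp.equiv 2 (Fin n → ℂ)).symm x with hxe
      set ye := (WithLp.equiv 2 (Fin n → ℂ)).symm y with hye
      set qx : ℝ := (star x ⬝ᵥ M *ᵥ x).im with hqx
      -- Step 1: the quadratic form of -M⁻¹ at y equals that of -Mᴴ at x
      have hsy : star y = star x ᵥ* M := by
        rw [hy, star_mulVec, conjTranspose_conjTranspose]
      have step1 : star y ⬝ᵥ (-M⁻¹) *ᵥ y = star x ⬝ᵥ (M * (-M⁻¹ * Mᴴ)) *ᵥ x := by
        rw [hsy, hy, mulVec_mulVec, dotProduct_mulVec, vecMul_vecMul, ← dotProduct_mulVec]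
      have hmat : M * (-M⁻¹ * Mᴴ) = -Mᴴ := by
        rw [← Matrix.mul_assoc, Matrix.mul_neg, hMM, Matrix.neg_mul, Matrix.one_mul]
      have step1' : (star y ⬝ᵥ (-M⁻¹) *ᵥ y).im = qx := by
        rw [step1, hmat, neg_mulVec, dotProduct_neg, conj_quad]
        simp [Complex.star_def, hqx]
      -- Step 2: use heq
      have step2 : star y ⬝ᵥ (-M⁻¹) *ᵥ y
          = z * ((‖ye‖ ^ 2 : ℝ) : ℂ) - star y ⬝ᵥ A *ᵥ y + star y ⬝ᵥ (S M) *ᵥ y := by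
        rw [heq, add_mulVec, sub_mulVec, smul_mulVec, one_mulVec, dotProduct_add,
          dotProduct_sub, dotProduct_smul, smul_eq_mul, dot_self_eq_norm_sq, hye]
      have haim : (star y ⬝ᵥ A *ᵥ y).im ≤ 0 := by
        have h := hA.dotProduct_mulVec_nonneg y
        rw [neg_mulVec, dotProduct_neg, quad_imPart, ← Complex.ofReal_neg,
          Complex.zero_le_real] at h
        linarith
      have hsim : 0 ≤ (star y ⬝ᵥ (S M) *ᵥ y).im := by
        have hps : (S (imPart M)).PosSemidef := hS _ hIm.posSemidef
        have h := hps.dotProduct_mulVec_nonneg y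
        rw [← imPart_S S hS, quad_imPart, Complex.zero_le_real] at h
        exact h
      have key : z.im * ‖ye‖ ^ 2 ≤ qx := by
        have h := congrArg Complex.im step2
        rw [step1'] at h
        simp only [Complex.add_im, Complex.sub_im, Complex.mul_im, Complex.ofReal_re,
          Complex.ofReal_im, mul_zero, add_zero] at h
        linarith
      -- Step 3: norm inequality
      have hxy : (M⁻¹)ᴴ *ᵥ y = x := by
        rw [hy, mulVec_mulVec, ← conjTranspose_mul, hMM, conjTranspose_one, one_mulVec]
      have hxe2 : xe = Matrix.toEuclideanCLM (𝕜 := ℂ) ((M⁻¹)ᴴ) ye := by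
        rw [hye, WithLp.equiv_symm_apply, Matrix.toEuclideanCLM_toLp, hxy, hxe]
        rfl
      have hnorm : ‖Matrix.toEuclideanCLM (𝕜 := ℂ) ((M⁻¹)ᴴ)‖ = k := by
        rw [← Matrix.star_eq_conjTranspose, map_star, ContinuousLinearMap.star_eq_adjoint,
          hk, opNorm]
        exact ContinuousLinearMap.adjoint.norm_map _
      have hxle : ‖xe‖ ≤ k * ‖ye‖ := by
        rw [hxe2, ← hnorm]
        exact (Matrix.toEuclideanCLM (𝕜 := ℂ) ((M⁻¹)ᴴ)).le_opNorm ye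
      -- Conclusion
      have hquad : star x ⬝ᵥ (imPart M - ((z.im / k ^ 2 : ℝ) : ℂ) • 1) *ᵥ x
          = ((qx - z.im / k ^ 2 * ‖xe‖ ^ 2 : ℝ) : ℂ) := by
        rw [sub_mulVec, dotProduct_sub, smul_mulVec, one_mulVec, dotProduct_smul,
          smul_eq_mul, quad_imPart, dot_self_eq_norm_sq, ← hxe, ← hqx]
        push_cast
        ring
      rw [hquad, Complex.zero_le_real]
      have h5 : ‖xe‖ ^ 2 ≤ k ^ 2 * ‖ye‖ ^ 2 := by
        nlinarith [norm_nonneg xe, norm_nonneg ye]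
      have h6 : z.im / k ^ 2 * ‖xe‖ ^ 2 ≤ z.im * ‖ye‖ ^ 2 := by
        rw [div_mul_eq_mul_div, div_le_iff₀ (by positivity)]
        nlinarith
      linarith
end

section
/- Let F : C^{n×n} → C^{n×n} be a linear map that is self-adjoint with respect to the inner product ⟨R,T⟩ = n⁻¹ Tr(R*T) and preserves the cone of positive semidefinite matrices. Then there exists a positive semidefinite matrix F₀ with ⟨F₀,F₀⟩ = 1 such that F[F₀] = ‖F‖_sp · F₀, where ‖F‖_sp is the operator norm of F induced by the Hilbert–Schmidt norm. -/
open Matrix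
open scoped ComplexOrder

/-- The normalized Hilbert–Schmidt norm `‖R‖_hs = (n⁻¹ Tr(R*R))^{1/2}` of a matrix. -/
noncomputable def hsNorm {n : ℕ} (R : Matrix (Fin n) (Fin n) ℂ) : ℝ :=
  Real.sqrt ((n : ℝ)⁻¹ * (Matrix.trace (Rᴴ * R)).re)

/-- The operator norm of a linear map on matrices induced by the Hilbert–Schmidt norm. -/
noncomputable def spNorm {n : ℕ}
    (F : Matrix (Fin n) (Fin n) ℂ →ₗ[ℂ] Matrix (Fin n) (Fin n) ℂ) : ℝ :=
  sSup {c : ℝ | ∃ R : Matrix (Fin n) (Fin n) ℂ, hsNorm R = 1 ∧ c = hsNorm (F R)}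

noncomputable def mEq (n : ℕ) : Matrix (Fin n) (Fin n) ℂ ≃ₗ[ℂ] EuclideanSpace ℂ (Fin n × Fin n) :=
  (LinearEquiv.curry ℂ ℂ (Fin n) (Fin n)).symm.trans (WithLp.linearEquiv 2 ℂ _).symm

lemma mEq_apply {n : ℕ} (R : Matrix (Fin n) (Fin n) ℂ) (p : Fin n × Fin n) :
    mEq n R p = R p.1 p.2 := rfl

lemma mEq_inner {n : ℕ} (R S : Matrix (Fin n) (Fin n) ℂ) :
    (inner ℂ (mEq n R) (mEq n S) : ℂ) = Matrix.trace (Rᴴ * S) := by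
  rw [PiLp.inner_apply]
  simp only [RCLike.inner_apply, mEq_apply]
  rw [Matrix.trace]
  simp only [Matrix.diag_apply, Matrix.mul_apply, Matrix.conjTranspose_apply]
  rw [Fintype.sum_prod_type]
  rw [Finset.sum_comm]
  simp [mul_comm, RingHom.coe_comp]

lemma mEq_norm {n : ℕ} (R : Matrix (Fin n) (Fin n) ℂ) :
    ‖mEq n R‖ = Real.sqrt ((Matrix.trace (Rᴴ * R)).re) := by
  rw [@norm_eq_sqrt_re_inner ℂ, mEq_inner]; rfl

lemma hsNorm_eq {n : ℕ} (R : Matrix (Fin n) (Fin n) ℂ) :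
    hsNorm R = Real.sqrt (n : ℝ)⁻¹ * ‖mEq n R‖ := by
  rw [hsNorm, mEq_norm, Real.sqrt_mul (by positivity)]

lemma hsNorm_smul {n : ℕ} (c : ℝ) (hc : 0 ≤ c) (R : Matrix (Fin n) (Fin n) ℂ) :
    hsNorm ((c : ℂ) • R) = c * hsNorm R := by
  rw [hsNorm_eq, hsNorm_eq, LinearEquiv.map_smul, norm_smul]
  simp only [Complex.norm_real, Real.norm_eq_abs, abs_of_nonneg hc]; ring

lemma psd_diag_re_nonneg {n : ℕ} {A : Matrix (Fin n) (Fin n) ℂ} (hA : A.PosSemidef)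
    (i : Fin n) : 0 ≤ A i i := by
  exact hA.diag_nonneg

lemma psd_trace_mul_re_nonneg {n : ℕ} {A B : Matrix (Fin n) (Fin n) ℂ}
    (hA : A.PosSemidef) (hB : B.PosSemidef) : 0 ≤ (Matrix.trace (A * B)).re := by
  obtain ⟨C, rfl⟩ : ∃ C : Matrix (Fin n) (Fin n) ℂ, A = Cᴴ * C :=
    by open scoped MatrixOrder Matrix.Norms.L2Operator in
      exact CStarAlgebra.nonneg_iff_eq_star_mul_self.mp hA.nonneg
  have h1 : (Cᴴ * C * B).trace = (C * B * Cᴴ).trace := (Matrix.trace_mul_cycle C B Cᴴ).symm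
  have h2 : (C * B * Cᴴ).PosSemidef := by
    simpa using hB.conjTranspose_mul_mul_same Cᴴ
  have h3 : 0 ≤ (C * B * Cᴴ).trace := by
    rw [Matrix.trace]
    exact Finset.sum_nonneg fun i _ => psd_diag_re_nonneg h2 i
  rw [h1]
  exact (Complex.le_def.mp h3).1

lemma psd_smul {n : ℕ} {A : Matrix (Fin n) (Fin n) ℂ} (hA : A.PosSemidef)
    {c : ℝ} (hc : 0 ≤ c) : ((c : ℂ) • A).PosSemidef := by
  obtain ⟨B, rfl⟩ : ∃ B : Matrix (Fin n) (Fin n) ℂ, A = Bᴴ * B :=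
    by open scoped MatrixOrder Matrix.Norms.L2Operator in
      exact CStarAlgebra.nonneg_iff_eq_star_mul_self.mp hA.nonneg
  suffices h : (c : ℂ) • (Bᴴ * B) = (((Real.sqrt c : ℂ)) • B)ᴴ * (((Real.sqrt c : ℂ)) • B) by
    rw [h]; exact Matrix.posSemidef_conjTranspose_mul_self _
  rw [Matrix.conjTranspose_smul, Matrix.smul_mul, Matrix.mul_smul, smul_smul]
  congr 1
  simp only [Complex.star_def, Complex.conj_ofReal, ← Complex.ofReal_mul,
    Real.mul_self_sqrt hc]

lemma herm_jordan {n : ℕ} {A : Matrix (Fin n) (Fin n) ℂ} (hA : A.IsHermitian) :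
    ∃ P Q : Matrix (Fin n) (Fin n) ℂ, P.PosSemidef ∧ Q.PosSemidef ∧ A = P - Q ∧
      P * Q = 0 ∧ Q * P = 0 := by
  classical
  set U : Matrix (Fin n) (Fin n) ℂ := (Matrix.IsHermitian.eigenvectorUnitary hA :
    Matrix (Fin n) (Fin n) ℂ) with hU
  set μ := hA.eigenvalues
  set Dp := Matrix.diagonal (fun i => ((max (μ i) 0 : ℝ) : ℂ))
  set Dm := Matrix.diagonal (fun i => ((max (-μ i) 0 : ℝ) : ℂ))
  refine ⟨U * Dp * star U, U * Dm * star U, ?_, ?_, ?_, ?_, ?_⟩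
  · exact (Matrix.posSemidef_diagonal_iff.mpr fun i =>
      Complex.zero_le_real.mpr (le_max_right _ _)).mul_mul_conjTranspose_same U
  · exact (Matrix.posSemidef_diagonal_iff.mpr fun i =>
      Complex.zero_le_real.mpr (le_max_right _ _)).mul_mul_conjTranspose_same U
  · have hD : Matrix.diagonal (RCLike.ofReal ∘ hA.eigenvalues) = Dp - Dm := by
      have hfun : RCLike.ofReal ∘ hA.eigenvalues
          = fun i => ((max (μ i) 0 : ℝ) : ℂ) - ((max (-μ i) 0 : ℝ) : ℂ) := by
        funext i
        rw [← Complex.ofReal_sub, max_zero_sub_eq_self]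
        rfl
      rw [hfun, Matrix.diagonal_sub]
    have hsp := hA.spectral_theorem
    rw [hsp, hD]
    simp only [Unitary.conjStarAlgAut_apply, Unitary.coe_star, hU, Matrix.mul_sub, Matrix.sub_mul]
  · have hUU : star U * U = 1 := Unitary.coe_star_mul_self hA.eigenvectorUnitary
    calc U * Dp * star U * (U * Dm * star U)
        = U * Dp * (star U * U) * Dm * star U := by noncomm_ring
      _ = U * (Dp * Dm) * star U := by rw [hUU]; noncomm_ring
      _ = 0 := by
          rw [Matrix.diagonal_mul_diagonal]
          have : (fun i => ((max (μ i) 0 : ℝ) : ℂ) * ((max (-μ i) 0 : ℝ) : ℂ)) = fun _ => 0 := by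
            funext i
            rw [← Complex.ofReal_mul]
            rcases le_total (μ i) 0 with h | h
            · rw [max_eq_right h]; simp
            · rw [max_eq_right (neg_nonpos.mpr h)]; simp
          rw [this]
          simp
  · have hUU : star U * U = 1 := Unitary.coe_star_mul_self hA.eigenvectorUnitary
    calc U * Dm * star U * (U * Dp * star U)
        = U * Dm * (star U * U) * Dp * star U := by noncomm_ring
      _ = U * (Dm * Dp) * star U := by rw [hUU]; noncomm_ring
      _ = 0 := by
          rw [Matrix.diagonal_mul_diagonal]
          have : (fun i => ((max (-μ i) 0 : ℝ) : ℂ) * ((max (μ i) 0 : ℝ) : ℂ)) = fun _ => 0 := by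
            funext i
            rw [← Complex.ofReal_mul]
            rcases le_total (μ i) 0 with h | h
            · rw [max_eq_right h]; simp
            · rw [max_eq_right (neg_nonpos.mpr h)]; simp
          rw [this]
          simp

lemma exists_eig_norm {E : Type*} [NormedAddCommGroup E] [InnerProductSpace ℂ E]
    [FiniteDimensional ℂ E] (hE : 0 < Module.finrank ℂ E) (G : E →L[ℂ] E)
    (hG : LinearMap.IsSymmetric (G : E →ₗ[ℂ] E)) :
    ∃ x : E, ‖x‖ = 1 ∧ ∃ μ : ℝ, G x = (μ : ℂ) • x ∧ |μ| = ‖G‖ := by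
  classical
  set N := Module.finrank ℂ E with hNdef
  have hN : Module.finrank ℂ E = N := rfl
  haveI : Nonempty (Fin N) := ⟨⟨0, hE⟩⟩
  set b := hG.eigenvectorBasis hN
  set μ := hG.eigenvalues hN
  have hne : (Finset.univ : Finset (Fin N)).Nonempty := Finset.univ_nonempty
  set M := Finset.univ.sup' hne fun i => |μ i|
  have hM0 : 0 ≤ M := le_trans (abs_nonneg _)
    (Finset.le_sup' (fun i => |μ i|) (Finset.mem_univ (Classical.arbitrary (Fin N))))
  have hrepr : ∀ (x : E) (i : Fin N), b.repr (G x) i = μ i * b.repr x i := fun x i =>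
    hG.eigenvectorBasis_apply_self_apply hN x i
  have hnormsq : ∀ y : E, ‖y‖ ^ 2 = ∑ i, ‖b.repr y i‖ ^ 2 := by
    intro y
    rw [← b.repr.norm_map y, EuclideanSpace.norm_eq,
      Real.sq_sqrt (Finset.sum_nonneg fun i _ => sq_nonneg _)]
  have hbound : ∀ x : E, ‖G x‖ ≤ M * ‖x‖ := by
    intro x
    have h1 : ‖G x‖ ^ 2 ≤ (M * ‖x‖) ^ 2 := by
      rw [hnormsq, mul_pow, hnormsq x, Finset.mul_sum]
      refine Finset.sum_le_sum fun i _ => ?_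
      rw [hrepr, norm_mul, mul_pow]
      have hle : ‖(μ i : ℂ)‖ ≤ M := by
        rw [Complex.norm_real, Real.norm_eq_abs]
        exact Finset.le_sup' (fun i => |μ i|) (Finset.mem_univ i)
      have h2 : ‖(μ i : ℂ)‖ ^ 2 ≤ M ^ 2 := pow_le_pow_left₀ (norm_nonneg _) hle 2
      exact mul_le_mul_of_nonneg_right h2 (sq_nonneg _)
    calc ‖G x‖ = Real.sqrt (‖G x‖ ^ 2) := (Real.sqrt_sq (norm_nonneg _)).symm
      _ ≤ Real.sqrt ((M * ‖x‖) ^ 2) := Real.sqrt_le_sqrt h1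
      _ = M * ‖x‖ := Real.sqrt_sq (by positivity)
  have hGle : ‖G‖ ≤ M := G.opNorm_le_bound hM0 hbound
  obtain ⟨i, -, hi⟩ := Finset.exists_mem_eq_sup' hne fun i => |μ i|
  have hxnorm : ‖b i‖ = 1 := b.orthonormal.1 i
  have happ : G (b i) = (μ i : ℂ) • b i := hG.apply_eigenvectorBasis hN i
  have hMle : M ≤ ‖G‖ := by
    have h1 : ‖G (b i)‖ = |μ i| := by
      rw [happ, norm_smul, hxnorm, mul_one, Complex.norm_real, Real.norm_eq_abs]
    have := G.le_opNorm (b i)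
    rw [h1, hxnorm, mul_one] at this
    calc M = |μ i| := hi
      _ ≤ ‖G‖ := this
  refine ⟨b i, hxnorm, μ i, happ, ?_⟩
  rw [show |μ i| = M from hi.symm]
  exact le_antisymm hMle hGle

set_option maxHeartbeats 2000000 in
theorem stmt_7 {n : ℕ} (hn : 0 < n)
    (F : Matrix (Fin n) (Fin n) ℂ →ₗ[ℂ] Matrix (Fin n) (Fin n) ℂ)
    (hFsa : ∀ R T : Matrix (Fin n) (Fin n) ℂ,
      (n : ℂ)⁻¹ * Matrix.trace ((F R)ᴴ * T) = (n : ℂ)⁻¹ * Matrix.trace (Rᴴ * F T))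
    (hFpos : ∀ R : Matrix (Fin n) (Fin n) ℂ, R.PosSemidef → (F R).PosSemidef) :
    ∃ F₀ : Matrix (Fin n) (Fin n) ℂ, F₀.PosSemidef ∧ hsNorm F₀ = 1 ∧
      F F₀ = ((spNorm F : ℝ) : ℂ) • F₀ := by
  classical
  have hnR : (0 : ℝ) < n := by exact_mod_cast hn
  set s : ℝ := Real.sqrt n with hs_def
  have hs : 0 < s := Real.sqrt_pos.mpr hnR
  have hsi : Real.sqrt (n : ℝ)⁻¹ = s⁻¹ := by rw [Real.sqrt_inv]
  have hss : s * s = n := Real.mul_self_sqrt hnR.le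
  -- the continuous operator on Euclidean space
  set G : EuclideanSpace ℂ (Fin n × Fin n) →L[ℂ] EuclideanSpace ℂ (Fin n × Fin n) :=
    LinearMap.toContinuousLinearMap
      (((mEq n).toLinearMap ∘ₗ F) ∘ₗ (mEq n).symm.toLinearMap) with hGdef
  have hGapp : ∀ R : Matrix (Fin n) (Fin n) ℂ, G (mEq n R) = mEq n (F R) := by
    intro R
    simp [hGdef]
  have hninv : ((n : ℂ))⁻¹ ≠ 0 := by
    simp only [ne_eq, inv_eq_zero, Nat.cast_eq_zero]
    exact hn.ne'
  have hGsym : LinearMap.IsSymmetric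
      ((G : EuclideanSpace ℂ (Fin n × Fin n) →ₗ[ℂ] EuclideanSpace ℂ (Fin n × Fin n))) := by
    intro x y
    obtain ⟨R, rfl⟩ := (mEq n).surjective x
    obtain ⟨S, rfl⟩ := (mEq n).surjective y
    show (inner ℂ (G (mEq n R)) (mEq n S) : ℂ) = inner ℂ (mEq n R) (G (mEq n S))
    rw [hGapp, hGapp, mEq_inner, mEq_inner]
    exact mul_left_cancel₀ hninv (hFsa R S)
  -- hsNorm of 1
  have hsone : hsNorm (1 : Matrix (Fin n) (Fin n) ℂ) = 1 := by
    rw [hsNorm]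
    simp only [Matrix.conjTranspose_one, Matrix.one_mul, Matrix.trace_one, Fintype.card_fin]
    rw [show ((n : ℕ) : ℂ).re = (n : ℝ) from Complex.natCast_re n]
    rw [inv_mul_cancel₀ hnR.ne']
    exact Real.sqrt_one
  -- hsNorm 1 means euclidean norm √n
  have hnorm_of_one : ∀ R : Matrix (Fin n) (Fin n) ℂ, hsNorm R = 1 → ‖mEq n R‖ = s := by
    intro R hR
    rw [hsNorm_eq, hsi, inv_mul_eq_div, div_eq_one_iff_eq hs.ne'] at hR
    exact hR
  -- spNorm F = ‖G‖
  set SS : Set ℝ := {c : ℝ | ∃ R : Matrix (Fin n) (Fin n) ℂ, hsNorm R = 1 ∧ c = hsNorm (F R)}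
    with hSS_def
  have hub : ∀ c ∈ SS, c ≤ ‖G‖ := by
    rintro c ⟨R, hR1, rfl⟩
    rw [hsNorm_eq, hsi, ← hGapp]
    calc s⁻¹ * ‖G (mEq n R)‖ ≤ s⁻¹ * (‖G‖ * ‖mEq n R‖) :=
          mul_le_mul_of_nonneg_left (G.le_opNorm _) (by positivity)
      _ = ‖G‖ := by
          rw [hnorm_of_one R hR1, mul_comm ‖G‖ s, ← mul_assoc, inv_mul_cancel₀ hs.ne', one_mul]
  have hSSne : SS.Nonempty := ⟨hsNorm (F 1), 1, hsone, rfl⟩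
  have hBdd : BddAbove SS := ⟨‖G‖, hub⟩
  have hsSup_nonneg : 0 ≤ sSup SS := by
    refine le_trans ?_ (le_csSup hBdd ⟨1, hsone, rfl⟩)
    exact Real.sqrt_nonneg _
  have hsp : spNorm F = ‖G‖ := by
    rw [spNorm]
    refine le_antisymm (csSup_le hSSne hub) ?_
    refine G.opNorm_le_bound hsSup_nonneg ?_
    intro x
    by_cases hx : x = 0
    · simp [hx]
    · have hxn : (0 : ℝ) < ‖x‖ := norm_pos_iff.mpr hx
      set c : ℝ := s / ‖x‖ with hc_def
      have hc : 0 < c := by positivity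
      set R : Matrix (Fin n) (Fin n) ℂ := (mEq n).symm (((c : ℝ) : ℂ) • x) with hR_def
      have hmR : mEq n R = ((c : ℝ) : ℂ) • x := (mEq n).apply_symm_apply _
      have hR1 : hsNorm R = 1 := by
        rw [hsNorm_eq, hsi, hmR, norm_smul]
        simp only [Complex.norm_real, Real.norm_eq_abs, abs_of_pos hc]
        rw [hc_def]
        field_simp
      have hmem : hsNorm (F R) ∈ SS := ⟨R, hR1, rfl⟩
      have hval : hsNorm (F R) = s⁻¹ * (c * ‖G x‖) := by
        rw [hsNorm_eq, hsi, ← hGapp, hmR, ContinuousLinearMap.map_smul, norm_smul]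
        simp only [Complex.norm_real, Real.norm_eq_abs, abs_of_pos hc]
      have hle := le_csSup hBdd hmem
      rw [hval, hc_def] at hle
      have : s⁻¹ * (s / ‖x‖ * ‖G x‖) = ‖G x‖ / ‖x‖ := by
        field_simp
      rw [this] at hle
      calc ‖G x‖ = (‖G x‖ / ‖x‖) * ‖x‖ := by field_simp
        _ ≤ sSup SS * ‖x‖ := mul_le_mul_of_nonneg_right hle hxn.le
  -- trivial case
  by_cases hG0 : ‖G‖ = 0
  · refine ⟨1, Matrix.PosSemidef.one, hsone, ?_⟩
    have hGz : G = 0 := norm_eq_zero.mp hG0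
    have hF1 : F 1 = 0 := by
      have := hGapp 1
      rw [hGz] at this
      simp only [ContinuousLinearMap.zero_apply] at this
      have h0 : mEq n (F 1) = mEq n 0 := by rw [← this]; simp
      exact (mEq n).injective h0
    rw [hF1, hsp, hG0]
    simp
  -- main case
  have hGpos : 0 < ‖G‖ := lt_of_le_of_ne (norm_nonneg _) (Ne.symm hG0)
  have hrankpos : 0 < Module.finrank ℂ (EuclideanSpace ℂ (Fin n × Fin n)) := by
    rw [finrank_euclideanSpace]
    simp only [Fintype.card_prod, Fintype.card_fin]
    positivity
  obtain ⟨x, hx1, μ, hxeig, hμ⟩ := exists_eig_norm hrankpos G hGsym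
  set R : Matrix (Fin n) (Fin n) ℂ := (mEq n).symm x with hRdef
  have hmR : mEq n R = x := (mEq n).apply_symm_apply _
  have hFR : F R = ((μ : ℝ) : ℂ) • R := by
    apply (mEq n).injective
    rw [← hGapp, hmR, hxeig, _root_.map_smul, hmR]
  have hRne : R ≠ 0 := by
    intro h
    rw [h] at hmR
    simp only [map_zero] at hmR
    rw [← hmR] at hx1
    simp at hx1
  -- F preserves hermitian
  have hFherm : ∀ H : Matrix (Fin n) (Fin n) ℂ, H.IsHermitian → (F H).IsHermitian := by
    intro H hH
    obtain ⟨P, Q, hP, hQ, hPQ, -, -⟩ := herm_jordan hH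
    rw [hPQ, map_sub]
    exact ((hFpos P hP).1).sub ((hFpos Q hQ).1)
  -- F commutes with conjTranspose
  have hFct : ∀ M : Matrix (Fin n) (Fin n) ℂ, F (Mᴴ) = (F M)ᴴ := by
    intro M
    set C : Matrix (Fin n) (Fin n) ℂ := (2⁻¹ : ℂ) • (M + Mᴴ) with hCdef
    set D : Matrix (Fin n) (Fin n) ℂ := (2⁻¹ : ℂ) • (M - Mᴴ) with hDdef
    have hCherm : C.IsHermitian := by
      rw [Matrix.IsHermitian, hCdef, Matrix.conjTranspose_smul, Matrix.conjTranspose_add,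
        Matrix.conjTranspose_conjTranspose]
      rw [show star (2⁻¹ : ℂ) = (2⁻¹ : ℂ) by norm_num [Complex.star_def]]
      rw [add_comm]
    have hDanti : Dᴴ = -D := by
      rw [hDdef, Matrix.conjTranspose_smul, Matrix.conjTranspose_sub,
        Matrix.conjTranspose_conjTranspose]
      rw [show star (2⁻¹ : ℂ) = (2⁻¹ : ℂ) by norm_num [Complex.star_def]]
      rw [← smul_neg]
      congr 1
      abel
    have hBherm : (Complex.I • D).IsHermitian := by
      rw [Matrix.IsHermitian, Matrix.conjTranspose_smul, hDanti]
      rw [show star Complex.I = -Complex.I by simp [Complex.star_def]]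
      rw [smul_neg, neg_smul, neg_neg]
    have hFD : (F D)ᴴ = -(F D) := by
      have h1 : (F (Complex.I • D))ᴴ = F (Complex.I • D) := hFherm _ hBherm
      rw [LinearMap.map_smul, Matrix.conjTranspose_smul] at h1
      rw [show star Complex.I = -Complex.I by simp [Complex.star_def]] at h1
      have h2 : Complex.I • (-(F D)ᴴ) = Complex.I • F D := by
        rw [smul_neg, ← neg_smul]
        exact h1
      have h3 : -(F D)ᴴ = F D :=
        smul_right_injective (Matrix (Fin n) (Fin n) ℂ) Complex.I_ne_zero h2
      exact neg_eq_iff_eq_neg.mp h3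
    have hFC : (F C)ᴴ = F C := hFherm C hCherm
    have hM : M = C + D := by
      rw [hCdef, hDdef, ← smul_add]
      rw [show M + Mᴴ + (M - Mᴴ) = (2 : ℂ) • M by
        rw [two_smul]; abel]
      rw [smul_smul]
      norm_num
    have hMH : Mᴴ = C - D := by
      rw [hCdef, hDdef, ← smul_sub]
      rw [show M + Mᴴ - (M - Mᴴ) = (2 : ℂ) • Mᴴ by
        rw [two_smul]; abel]
      rw [smul_smul]
      norm_num
    rw [hMH, map_sub]
    conv_rhs => rw [hM, map_add, Matrix.conjTranspose_add, hFC, hFD]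
    abel
  -- hermitian eigen-matrix
  have hμreal : star ((μ : ℝ) : ℂ) = ((μ : ℝ) : ℂ) := by
    rw [Complex.star_def, Complex.conj_ofReal]
  have hFRH : F (Rᴴ) = ((μ : ℝ) : ℂ) • Rᴴ := by
    rw [hFct, hFR, Matrix.conjTranspose_smul, hμreal]
  obtain ⟨H, hHherm, hHne, hFH⟩ : ∃ H : Matrix (Fin n) (Fin n) ℂ,
      H.IsHermitian ∧ H ≠ 0 ∧ F H = ((μ : ℝ) : ℂ) • H := by
    by_cases hR0 : R + Rᴴ = 0
    · refine ⟨Complex.I • R, ?_, ?_, ?_⟩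
      · have hRH : Rᴴ = -R := eq_neg_of_add_eq_zero_left (by rw [add_comm]; exact hR0)
        rw [Matrix.IsHermitian, Matrix.conjTranspose_smul, hRH]
        rw [show star Complex.I = -Complex.I by simp [Complex.star_def]]
        rw [smul_neg, neg_smul, neg_neg]
      · exact smul_ne_zero Complex.I_ne_zero hRne
      · rw [LinearMap.map_smul, hFR, smul_comm]
    · exact ⟨R + Rᴴ, by rw [Matrix.IsHermitian, Matrix.conjTranspose_add,
        Matrix.conjTranspose_conjTranspose, add_comm], hR0, by
        rw [map_add, hFR, hFRH, smul_add]⟩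
  -- Jordan decomposition of H
  obtain ⟨P, Q, hP, hQ, hHPQ, hPQ0, hQP0⟩ := herm_jordan hHherm
  have hSpsd : (P + Q).PosSemidef := hP.add hQ
  have hSS2 : (P + Q) * (P + Q) = H * H := by
    have e1 : (P + Q) * (P + Q) = P * P + (P * Q + Q * P) + Q * Q := by noncomm_ring
    have e2 : (P - Q) * (P - Q) = P * P - (P * Q + Q * P) + Q * Q := by noncomm_ring
    rw [hHPQ, e1, e2, hPQ0, hQP0]
    simp
  have hsnormS : hsNorm (P + Q) = hsNorm H := by
    rw [hsNorm, hsNorm, show (P + Q)ᴴ = P + Q from hSpsd.1,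
      show Hᴴ = H from hHherm, hSS2]
  have hmEqHne : mEq n H ≠ 0 := fun h => hHne (by
    have := congrArg (mEq n).symm h
    simpa using this)
  have ht : 0 < hsNorm H := by
    rw [hsNorm_eq, hsi]
    exact mul_pos (inv_pos.mpr hs) (norm_pos_iff.mpr hmEqHne)
  set t : ℝ := hsNorm H with ht_def
  set c : ℝ := t⁻¹ with hc_def
  have hc0 : 0 ≤ c := inv_nonneg.mpr ht.le
  set P' : Matrix (Fin n) (Fin n) ℂ := ((c : ℝ) : ℂ) • P with hP'def
  set Q' : Matrix (Fin n) (Fin n) ℂ := ((c : ℝ) : ℂ) • Q with hQ'def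
  set F₀ : Matrix (Fin n) (Fin n) ℂ := P' + Q' with hF₀def
  set H' : Matrix (Fin n) (Fin n) ℂ := P' - Q' with hH'def
  have hP'psd : P'.PosSemidef := psd_smul hP hc0
  have hQ'psd : Q'.PosSemidef := psd_smul hQ hc0
  have hF₀psd : F₀.PosSemidef := hP'psd.add hQ'psd
  have hF₀eq : F₀ = ((c : ℝ) : ℂ) • (P + Q) := by rw [hF₀def, hP'def, hQ'def, smul_add]
  have hH'eq : H' = ((c : ℝ) : ℂ) • H := by rw [hH'def, hP'def, hQ'def, ← smul_sub, ← hHPQ]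
  have hF₀norm : hsNorm F₀ = 1 := by
    rw [hF₀eq, hsNorm_smul c hc0, hsnormS, hc_def]
    exact inv_mul_cancel₀ ht.ne'
  have hH'norm : hsNorm H' = 1 := by
    rw [hH'eq, hsNorm_smul c hc0, hc_def]
    exact inv_mul_cancel₀ ht.ne'
  have hFH' : F H' = ((μ : ℝ) : ℂ) • H' := by
    rw [hH'eq, LinearMap.map_smul, hFH, smul_smul, smul_smul, mul_comm]
  -- real inner products
  have hcross : ∀ A B : Matrix (Fin n) (Fin n) ℂ, A.PosSemidef → B.PosSemidef →
      0 ≤ (inner ℂ (mEq n (F A)) (mEq n B) : ℂ).re := by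
    intro A B hA hB
    rw [mEq_inner, show (F A)ᴴ = F A from (hFpos A hA).1]
    exact psd_trace_mul_re_nonneg (hFpos A hA) hB
  have haPP := hcross P' P' hP'psd hP'psd
  have haPQ := hcross P' Q' hP'psd hQ'psd
  have haQP := hcross Q' P' hQ'psd hP'psd
  have haQQ := hcross Q' Q' hQ'psd hQ'psd
  have hyexp : (inner ℂ (mEq n (F F₀)) (mEq n F₀) : ℂ).re
      = (inner ℂ (mEq n (F P')) (mEq n P') : ℂ).re + (inner ℂ (mEq n (F P')) (mEq n Q') : ℂ).re
        + (inner ℂ (mEq n (F Q')) (mEq n P') : ℂ).re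
        + (inner ℂ (mEq n (F Q')) (mEq n Q') : ℂ).re := by
    have h1 : (inner ℂ (mEq n (F F₀)) (mEq n F₀) : ℂ)
        = inner ℂ (mEq n (F P')) (mEq n P') + inner ℂ (mEq n (F P')) (mEq n Q')
          + inner ℂ (mEq n (F Q')) (mEq n P') + inner ℂ (mEq n (F Q')) (mEq n Q') := by
      rw [hF₀def, LinearMap.map_add, map_add (mEq n), map_add (mEq n)]
      rw [inner_add_left, inner_add_right, inner_add_right]
      ring
    rw [h1]
    simp [Complex.add_re]
  have hzexp : (inner ℂ (mEq n (F H')) (mEq n H') : ℂ).re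
      = (inner ℂ (mEq n (F P')) (mEq n P') : ℂ).re - (inner ℂ (mEq n (F P')) (mEq n Q') : ℂ).re
        - (inner ℂ (mEq n (F Q')) (mEq n P') : ℂ).re
        + (inner ℂ (mEq n (F Q')) (mEq n Q') : ℂ).re := by
    have h1 : (inner ℂ (mEq n (F H')) (mEq n H') : ℂ)
        = inner ℂ (mEq n (F P')) (mEq n P') - inner ℂ (mEq n (F P')) (mEq n Q')
          - inner ℂ (mEq n (F Q')) (mEq n P') + inner ℂ (mEq n (F Q')) (mEq n Q') := by
      rw [hH'def, LinearMap.map_sub, map_sub (mEq n), map_sub (mEq n)]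
      rw [inner_sub_left, inner_sub_right, inner_sub_right]
      ring
    rw [h1]
    simp [Complex.add_re, Complex.sub_re]
  have hzn : ‖mEq n H'‖ = s := hnorm_of_one H' hH'norm
  have hyn : ‖mEq n F₀‖ = s := hnorm_of_one F₀ hF₀norm
  have hzval : (inner ℂ (mEq n (F H')) (mEq n H') : ℂ).re = μ * (s * s) := by
    rw [hFH', LinearEquiv.map_smul, inner_smul_left, Complex.conj_ofReal]
    rw [Complex.mul_re, Complex.ofReal_re, Complex.ofReal_im]
    rw [show (inner ℂ (mEq n H') (mEq n H') : ℂ).im = 0 from by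
      simpa using inner_self_im (𝕜 := ℂ) (mEq n H')]
    rw [show (inner ℂ (mEq n H') (mEq n H') : ℂ).re = ‖mEq n H'‖ ^ 2 from by
      simpa using inner_self_eq_norm_sq (𝕜 := ℂ) (mEq n H')]
    rw [hzn]
    ring
  have hkey : ‖G‖ * (s * s) ≤ (inner ℂ (mEq n (F F₀)) (mEq n F₀) : ℂ).re := by
    have h2 : μ * (s * s) = (inner ℂ (mEq n (F P')) (mEq n P') : ℂ).re
        - (inner ℂ (mEq n (F P')) (mEq n Q') : ℂ).re
        - (inner ℂ (mEq n (F Q')) (mEq n P') : ℂ).re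
        + (inner ℂ (mEq n (F Q')) (mEq n Q') : ℂ).re := by rw [← hzval, hzexp]
    have h3 : ‖G‖ * (s * s) = |μ * (s * s)| := by
      rw [abs_mul, abs_of_nonneg (by positivity : (0:ℝ) ≤ s * s), hμ]
    rw [h3, hyexp]
    rw [h2]
    rw [abs_le]
    constructor <;> linarith
  have hub2 : ∀ w : EuclideanSpace ℂ (Fin n × Fin n),
      (inner ℂ (G w) w : ℂ).re ≤ ‖G‖ * (‖w‖ * ‖w‖) := by
    intro w
    calc (inner ℂ (G w) w : ℂ).re ≤ ‖G w‖ * ‖w‖ := by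
          rw [← RCLike.re_to_complex]
          exact re_inner_le_norm (G w) w
      _ ≤ (‖G‖ * ‖w‖) * ‖w‖ := mul_le_mul_of_nonneg_right (G.le_opNorm w) (norm_nonneg w)
      _ = ‖G‖ * (‖w‖ * ‖w‖) := by ring
  have hGyy : (inner ℂ (G (mEq n F₀)) (mEq n F₀) : ℂ).re
      = (inner ℂ (mEq n (F F₀)) (mEq n F₀) : ℂ).re := by rw [hGapp]
  have hre : G.reApplyInnerSelf (mEq n F₀) = ‖G‖ * (s * s) := by
    rw [ContinuousLinearMap.reApplyInnerSelf_apply]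
    refine le_antisymm ?_ ?_
    · calc (RCLike.re (inner ℂ (G (mEq n F₀)) (mEq n F₀) : ℂ))
          ≤ ‖G‖ * (‖mEq n F₀‖ * ‖mEq n F₀‖) := hub2 _
        _ = ‖G‖ * (s * s) := by rw [hyn]
    · rw [show (RCLike.re (inner ℂ (G (mEq n F₀)) (mEq n F₀) : ℂ))
        = (inner ℂ (mEq n (F F₀)) (mEq n F₀) : ℂ).re from hGyy]
      exact hkey
  have hmax : IsMaxOn G.reApplyInnerSelf (Metric.sphere 0 ‖mEq n F₀‖) (mEq n F₀) := by
    rw [isMaxOn_iff]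
    intro w hw
    have hwn : ‖w‖ = ‖mEq n F₀‖ := by simpa using mem_sphere_zero_iff_norm.mp hw
    rw [hre, ContinuousLinearMap.reApplyInnerSelf_apply]
    calc (RCLike.re (inner ℂ (G w) w : ℂ)) ≤ ‖G‖ * (‖w‖ * ‖w‖) := hub2 w
      _ = ‖G‖ * (s * s) := by rw [hwn, hyn]
  have hSA : IsSelfAdjoint G := ContinuousLinearMap.isSelfAdjoint_iff_isSymmetric.mpr hGsym
  have heig : G (mEq n F₀) = ((G.rayleighQuotient (mEq n F₀) : ℝ) : ℂ) • (mEq n F₀) :=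
    hSA.eq_smul_self_of_isLocalExtrOn (Or.inr hmax.localize)
  have hray : G.rayleighQuotient (mEq n F₀) = ‖G‖ := by
    show G.reApplyInnerSelf (mEq n F₀) / ‖mEq n F₀‖ ^ 2 = ‖G‖
    rw [hre, hyn, pow_two, mul_div_assoc, div_self (by positivity : s * s ≠ 0), mul_one]
  have hfinal : F F₀ = ((‖G‖ : ℝ) : ℂ) • F₀ := by
    apply (mEq n).injective
    rw [LinearEquiv.map_smul, ← hGapp, heig, hray]
  exact ⟨F₀, hF₀psd, hF₀norm, by rw [hsp]; exact hfinal⟩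
end
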